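/- For any δ > n, the set of vectors a ∈ ℝⁿ that are NOT δ-badly approximable has Lebesgue measure zero; i.e., for almost every a ∈ ℝⁿ there exists c > 0 such that |q·a − m| ≥ c|q|^{−δ} for all nonzero q ∈ ℤⁿ and all m ∈ ℤ. -/

import Mathlib

open MeasureTheory

/-- A vector `a ∈ ℝⁿ` is `δ`-badly approximable if there is `c > 0` with
`|q·a − m| ≥ c|q|^(−δ)` for all nonzero `q ∈ ℤⁿ` and all `m ∈ ℤ`. -/
def IsDeltaBadlyApproximable {n : ℕ} (δ : ℝ) (a : Fin n → ℝ) : Prop :=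
  ∃ c > (0 : ℝ), ∀ q : Fin n → ℤ, q ≠ 0 → ∀ m : ℤ,
    |(∑ i, (q i : ℝ) * a i) - (m : ℝ)| ≥
      c * (Real.sqrt (∑ i, ((q i : ℝ)) ^ 2)) ^ (-δ)

namespace DBAProof

open Finset

noncomputable def gg (s : ℝ) (t : ℤ) : ENNReal := ENNReal.ofReal ((max 1 |(t:ℝ)|) ^ (-s))

lemma tsum_pi_prod (g : ℤ → ENNReal) : ∀ k : ℕ,
    ∑' q : Fin k → ℤ, ∏ i, g (q i) = (∑' t : ℤ, g t) ^ k := by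
  intro k
  induction k with
  | zero => simp [tsum_eq_single (0 : Fin 0 → ℤ) (fun b hb => absurd (Subsingleton.elim b 0) hb)]
  | succ k ih =>
    rw [← (Fin.consEquiv (fun _ => ℤ)).tsum_eq]
    simp only [Fin.consEquiv_apply]
    rw [ENNReal.tsum_prod']
    simp only [Fin.prod_univ_succ, Fin.cons_zero, Fin.cons_succ]
    calc ∑' (t : ℤ) (y : Fin k → ℤ), g t * ∏ j, g (y j)
        = ∑' (t : ℤ), g t * ∑' y : Fin k → ℤ, ∏ j, g (y j) := by
          congr 1; ext t; exact ENNReal.tsum_mul_left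
      _ = (∑' t : ℤ, g t) * ∑' y : Fin k → ℤ, ∏ j, g (y j) := ENNReal.tsum_mul_right
      _ = (∑' t : ℤ, g t) ^ (k+1) := by rw [ih]; ring

lemma tsum_gg_ne_top {s : ℝ} (hs : 1 < s) : ∑' t : ℤ, gg s t ≠ ⊤ := by
  rw [ENNReal.tsum_eq_add_tsum_ite (0 : ℤ)]
  have h1 : ∑' t : ℤ, (if t = 0 then 0 else gg s t) ≤
      ∑' t : ℤ, ENNReal.ofReal (|(t:ℝ)| ^ (-s)) := by
    refine ENNReal.tsum_le_tsum fun t => ?_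
    by_cases ht : t = 0
    · simp [ht]
    · simp only [ht, if_false, gg]
      have : (1:ℝ) ≤ |(t:ℝ)| := by
        rw [← Int.cast_abs]; exact_mod_cast Int.one_le_abs (by exact_mod_cast ht)
      rw [max_eq_right this]
  have h2 : ∑' t : ℤ, ENNReal.ofReal (|(t:ℝ)| ^ (-s)) ≠ ⊤ := by
    rw [← ENNReal.ofReal_tsum_of_nonneg (fun t => Real.rpow_nonneg (abs_nonneg _) _)
      (Real.summable_abs_int_rpow hs)]
    exact ENNReal.ofReal_ne_top
  refine ENNReal.add_ne_top.2 ⟨ENNReal.ofReal_ne_top, ?_⟩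
  have h1' : ∑' t : ℤ, (if t = 0 then 0 else gg s t) ≠ ⊤ := (h1.trans_lt h2.lt_top).ne
  convert h1' using 2
  funext t
  by_cases ht : t = 0 <;> simp [ht]

noncomputable def rr {n : ℕ} (q : Fin n → ℤ) : ℝ := Real.sqrt (∑ i, ((q i : ℝ)) ^ 2)

lemma abs_le_rr {n : ℕ} (q : Fin n → ℤ) (i : Fin n) : |(q i : ℝ)| ≤ rr q := by
  rw [← Real.sqrt_sq_eq_abs]
  exact Real.sqrt_le_sqrt (Finset.single_le_sum (f := fun j => ((q j : ℝ))^2)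
    (fun j _ => sq_nonneg _) (mem_univ i))

lemma exists_max {n : ℕ} (q : Fin (n+1) → ℤ) (hq : q ≠ 0) :
    ∃ i0, (∀ i, |q i| ≤ |q i0|) ∧ 1 ≤ |q i0| := by
  obtain ⟨i0, -, hi0⟩ := Finset.exists_max_image Finset.univ (fun i => |q i|) univ_nonempty
  obtain ⟨j, hj⟩ := Function.ne_iff.1 hq
  exact ⟨i0, fun i => hi0 i (mem_univ i), le_trans (Int.one_le_abs (by simpa using hj))
    (hi0 j (mem_univ j))⟩

lemma one_le_rr {n : ℕ} (q : Fin (n+1) → ℤ) (hq : q ≠ 0) : 1 ≤ rr q := by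
  obtain ⟨i0, -, h1⟩ := exists_max q hq
  calc (1:ℝ) ≤ |(q i0 : ℝ)| := by rw [← Int.cast_abs]; exact_mod_cast h1
    _ ≤ rr q := abs_le_rr q i0

lemma term_le_prod {n : ℕ} {δ : ℝ} (hδ : 0 < δ) (q : Fin (n+1) → ℤ) :
    ENNReal.ofReal ((rr q) ^ (-δ)) ≤ ∏ i, gg (δ/(n+1)) (q i) := by
  by_cases hq : q = 0
  · subst hq
    simp [rr, Real.zero_rpow (neg_ne_zero.2 hδ.ne')]
  · obtain ⟨i0, hmax, h1⟩ := exists_max q hq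
    set s : ℝ := δ/(n+1) with hs
    have hspos : 0 < s := by positivity
    have hm : ∀ i : Fin (n+1), (0:ℝ) ≤ max 1 |(q i : ℝ)| := fun i => le_trans zero_le_one
      (le_max_left _ _)
    have hprod : ∏ i, gg s (q i) = ENNReal.ofReal (∏ i, (max 1 |(q i : ℝ)|) ^ (-s)) :=
      (ENNReal.ofReal_prod_of_nonneg (fun i _ => Real.rpow_nonneg (hm i) _)).symm
    rw [hprod]
    apply ENNReal.ofReal_le_ofReal
    rw [Real.finset_prod_rpow _ _ (fun i _ => hm i)]
    set P : ℝ := ∏ i, max 1 |(q i : ℝ)| with hP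
    have hQ1 : (1:ℝ) ≤ |(q i0 : ℝ)| := by rw [← Int.cast_abs]; exact_mod_cast h1
    have hPpos : 0 < P := Finset.prod_pos fun i _ => lt_of_lt_of_le one_pos (le_max_left _ _)
    have hPle : P ≤ |(q i0 : ℝ)| ^ ((n:ℝ)+1) := by
      have : P ≤ ∏ _i : Fin (n+1), |(q i0 : ℝ)| := by
        apply Finset.prod_le_prod (fun i _ => hm i)
        intro i _
        refine max_le hQ1 ?_
        rw [← Int.cast_abs, ← Int.cast_abs]; exact_mod_cast hmax i
      rw [Finset.prod_const, card_univ, Fintype.card_fin] at this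
      rwa [show ((n:ℝ)+1) = ((n+1 : ℕ):ℝ) by push_cast; ring, Real.rpow_natCast]
    have hrpos : 0 < rr q := lt_of_lt_of_le one_pos (one_le_rr q hq)
    have key : P ^ s ≤ (rr q) ^ δ := by
      calc P ^ s ≤ (|(q i0 : ℝ)| ^ ((n:ℝ)+1)) ^ s :=
            Real.rpow_le_rpow hPpos.le hPle hspos.le
        _ = |(q i0 : ℝ)| ^ (((n:ℝ)+1) * s) := by
            rw [← Real.rpow_mul (abs_nonneg _)]
        _ = |(q i0 : ℝ)| ^ δ := by
            rw [hs]; congr 1; field_simp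
        _ ≤ (rr q) ^ δ := Real.rpow_le_rpow (abs_nonneg _) (abs_le_rr q i0) hδ.le
    rw [Real.rpow_neg hrpos.le, Real.rpow_neg hPpos.le]
    exact inv_anti₀ (Real.rpow_pos_of_pos hPpos s) key

lemma slab_vol {N : ℕ} (q : Fin (N+1) → ℤ) (i0 : Fin (N+1)) (h0 : q i0 ≠ 0) (m : ℤ)
    (ε R : ℝ) (hε : 0 ≤ ε) :
    volume {a : Fin (N+1) → ℝ | |(∑ i, (q i : ℝ) * a i) - m| < ε ∧ ∀ i, |a i| ≤ R}
      ≤ ENNReal.ofReal (2 * ε / |(q i0 : ℝ)|) * ENNReal.ofReal (2 * R) ^ N := by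
  have hq0 : (0:ℝ) < |(q i0 : ℝ)| := by
    rw [← Int.cast_abs]; exact_mod_cast abs_pos.2 h0
  set A : Set (Fin (N+1) → ℝ) :=
    {a | |(∑ i, (q i : ℝ) * a i) - m| < ε ∧ ∀ i, |a i| ≤ R} with hA
  have hAm : MeasurableSet A := by
    rw [hA, Set.setOf_and]
    apply MeasurableSet.inter
    · exact measurableSet_lt (((Finset.measurable_sum _ (fun i _ =>
        (measurable_pi_apply i).const_mul _)).sub measurable_const).abs) measurable_const
    · rw [Set.setOf_forall]
      exact MeasurableSet.iInter fun i =>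
        measurableSet_le (measurable_pi_apply i).abs measurable_const
  set e := MeasurableEquiv.piFinSuccAbove (fun _ : Fin (N+1) => ℝ) i0 with he
  have hpres := (volume_preserving_piFinSuccAbove (fun _ : Fin (N+1) => ℝ) i0).symm
  have hvol : volume A = volume (e.symm ⁻¹' A) :=
    (hpres.measure_preimage hAm.nullMeasurableSet).symm
  set A'' : Set (ℝ × (Fin N → ℝ)) :=
    {p | |(q i0 : ℝ) * p.1 + (∑ j, (q (i0.succAbove j) : ℝ) * p.2 j) - m| < ε ∧
      ∀ j, |p.2 j| ≤ R} with hA''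
  have hsub : e.symm ⁻¹' A ⊆ A'' := by
    rintro ⟨x, y⟩ hp
    have hins : e.symm (x, y) = Fin.insertNth (α := fun _ => ℝ) i0 x y := rfl
    rw [Set.mem_preimage, hins, hA, Set.mem_setOf_eq] at hp
    obtain ⟨h1, h2⟩ := hp
    have hsum : ∑ i, (q i : ℝ) * (Fin.insertNth (α := fun _ => ℝ) i0 x y) i
        = (q i0:ℝ) * x + ∑ j, (q (i0.succAbove j) : ℝ) * y j := by
      have := Fin.sum_univ_succAbove
        (fun i => (q i : ℝ) * (Fin.insertNth (α := fun _ => ℝ) i0 x y) i) i0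
      simpa using this
    rw [hsum] at h1
    exact ⟨h1, fun j => by simpa using h2 (i0.succAbove j)⟩
  have hA''m : MeasurableSet A'' := by
    rw [hA'', Set.setOf_and]
    apply MeasurableSet.inter
    · refine measurableSet_lt ?_ measurable_const
      apply Measurable.abs
      apply Measurable.sub _ measurable_const
      exact (measurable_fst.const_mul _).add
        (Finset.measurable_sum _ fun j _ =>
          ((measurable_pi_apply j).comp measurable_snd).const_mul _)
    · rw [Set.setOf_forall]
      exact MeasurableSet.iInter fun j =>
        measurableSet_le (by fun_prop : Measurable fun p : ℝ × (Fin N → ℝ) => |p.2 j|)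
          measurable_const
  rw [hvol]
  refine le_trans (measure_mono hsub) ?_
  rw [Measure.volume_eq_prod, Measure.prod_apply_symm hA''m]
  set box' : Set (Fin N → ℝ) := Set.pi Set.univ (fun _ => Set.Icc (-R) R) with hbox'
  have hbm : MeasurableSet box' := MeasurableSet.univ_pi fun _ => measurableSet_Icc
  have hslice : ∀ y : Fin N → ℝ,
      volume ((fun x => (x, y)) ⁻¹' A'') ≤
        box'.indicator (fun _ => ENNReal.ofReal (2 * (ε / |(q i0 : ℝ)|))) y := by
    intro y
    by_cases hy : y ∈ box'
    · rw [Set.indicator_of_mem hy]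
      set t : ℝ := (∑ j, (q (i0.succAbove j) : ℝ) * y j) with ht
      have hsub2 : ((fun x => (x, y)) ⁻¹' A'') ⊆
          Metric.ball (((m:ℝ) - t) / (q i0 : ℝ)) (ε / |(q i0 : ℝ)|) := by
        intro x hx
        obtain ⟨h1, -⟩ := hx
        dsimp only at h1
        rw [Metric.mem_ball, Real.dist_eq]
        have heq : x - ((m:ℝ) - t) / (q i0 : ℝ) =
            ((q i0 : ℝ) * x + t - m) / (q i0 : ℝ) := by
          field_simp
          ring
        rw [heq, abs_div]
        rw [div_lt_div_iff_of_pos_right hq0] at *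
        · exact h1
      refine (measure_mono hsub2).trans ?_
      rw [Real.volume_ball]
    · rw [Set.indicator_of_notMem hy]
      have hempty : ((fun x => (x, y)) ⁻¹' A'') = ∅ := by
        ext x
        simp only [Set.mem_preimage, Set.mem_empty_iff_false, iff_false]
        rintro ⟨-, h2⟩
        exact hy fun j _ => ⟨neg_le_of_abs_le (h2 j), le_of_abs_le (h2 j)⟩
      simp [hempty]
  refine le_trans (lintegral_mono hslice) ?_
  rw [lintegral_indicator hbm, setLIntegral_const]
  have hboxvol : volume box' = ENNReal.ofReal (2 * R) ^ N := by
    rw [hbox', volume_pi_pi]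
    simp [Real.volume_Icc, two_mul]
  rw [hboxvol]
  have h2e : 2 * (ε / |(q i0:ℝ)|) = 2 * ε / |(q i0:ℝ)| := by ring
  rw [h2e]

noncomputable def Mq {N : ℕ} (q : Fin (N+1) → ℤ) (R : ℕ) : ℤ := (∑ i, |q i|) * R + 1

noncomputable def Tset {N : ℕ} (q : Fin (N+1) → ℤ) (R : ℕ) (δ c : ℝ) :
    Set (Fin (N+1) → ℝ) :=
  ⋃ m ∈ Finset.Icc (-(Mq q R)) (Mq q R),
    {a | |(∑ i, (q i : ℝ) * a i) - m| < c * rr q ^ (-δ) ∧ ∀ i, |a i| ≤ (R:ℝ)}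

lemma Tset_bound {N R : ℕ} (hR : 1 ≤ R) {δ c : ℝ} (hc : 0 < c)
    (q : Fin (N+1) → ℤ) (hq : q ≠ 0) :
    volume (Tset q R δ c) ≤ ENNReal.ofReal (10*((N:ℝ)+1)*R) * ENNReal.ofReal (2*R) ^ N
      * ENNReal.ofReal c * ENNReal.ofReal (rr q ^ (-δ)) := by
  obtain ⟨i0, hmax, h1⟩ := exists_max q hq
  have hq0 : q i0 ≠ 0 := fun h => by simp [h] at h1
  set ε : ℝ := c * rr q ^ (-δ) with hε
  have hεpos : 0 ≤ ε := mul_nonneg hc.le (Real.rpow_nonneg (Real.sqrt_nonneg _) _)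
  set Q' : ℝ := |(q i0 : ℝ)| with hQ'
  have hQ'1 : (1:ℝ) ≤ Q' := by rw [hQ', ← Int.cast_abs]; exact_mod_cast h1
  have hQ'pos : (0:ℝ) < Q' := lt_of_lt_of_le one_pos hQ'1
  have hcard : (Finset.Icc (-(Mq q R)) (Mq q R)).card = (2 * Mq q R + 1).toNat := by
    rw [Int.card_Icc]; congr 1; ring
  have hS1 : 1 ≤ ∑ i, |q i| :=
    le_trans h1 (Finset.single_le_sum (f := fun i => |q i|) (fun i _ => abs_nonneg _)
      (mem_univ i0))
  have hSle : ∑ i, |q i| ≤ (N+1) * |q i0| := by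
    calc ∑ i, |q i| ≤ ∑ _i : Fin (N+1), |q i0| := Finset.sum_le_sum fun i _ => hmax i
      _ = (N+1) * |q i0| := by
          rw [Finset.sum_const, card_univ, Fintype.card_fin, nsmul_eq_mul]
          push_cast
          ring
  have hMint : 2 * Mq q R + 1 ≤ 5 * (N+1) * |q i0| * R := by
    have ha : (∑ i, |q i|) * (R:ℤ) ≤ (N+1) * |q i0| * R :=
      mul_le_mul_of_nonneg_right hSle (Int.natCast_nonneg R)
    have hb : (1:ℤ) ≤ (N+1) * |q i0| * R := by
      have hN1 : (1:ℤ) ≤ (N:ℤ)+1 := by linarith [Int.natCast_nonneg N]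
      nlinarith [h1, (by exact_mod_cast hR : (1:ℤ) ≤ (R:ℤ))]
    rw [Mq]; linarith
  have hM0 : (0:ℤ) ≤ 2 * Mq q R + 1 := by
    have : (0:ℤ) ≤ Mq q R := by rw [Mq]; positivity
    linarith
  have hcardR : (((2 * Mq q R + 1).toNat : ℝ)) * (2 * ε / Q')
      ≤ 10 * ((N:ℝ)+1) * R * ε := by
    have hQcast : ((|q i0| : ℤ) : ℝ) = Q' := by rw [hQ']; push_cast; rfl
    have htn : (((2 * Mq q R + 1).toNat : ℕ) : ℝ) = ((2 * Mq q R + 1 : ℤ) : ℝ) := by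
      exact_mod_cast Int.toNat_of_nonneg hM0
    have hcast : (((2 * Mq q R + 1).toNat : ℝ)) ≤ 5 * ((N:ℝ)+1) * Q' * R := by
      rw [htn, ← hQcast]
      exact_mod_cast hMint
    have h2 : (0:ℝ) ≤ 2 * ε / Q' := by positivity
    calc (((2 * Mq q R + 1).toNat : ℝ)) * (2 * ε / Q')
        ≤ (5 * ((N:ℝ)+1) * Q' * R) * (2 * ε / Q') := mul_le_mul_of_nonneg_right hcast h2
      _ = 10 * ((N:ℝ)+1) * R * ε := by field_simp; ring
  calc volume (Tset q R δ c)
      ≤ ∑ m ∈ Finset.Icc (-(Mq q R)) (Mq q R),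
          volume {a : Fin (N+1) → ℝ | |(∑ i, (q i : ℝ) * a i) - m| < ε ∧ ∀ i, |a i| ≤ (R:ℝ)} :=
        measure_biUnion_finset_le _ _
    _ ≤ (Finset.Icc (-(Mq q R)) (Mq q R)).card •
          (ENNReal.ofReal (2 * ε / Q') * ENNReal.ofReal (2*(R:ℝ)) ^ N) :=
        Finset.sum_le_card_nsmul _ _ _ (fun m _ => slab_vol q i0 hq0 m ε R hεpos)
    _ = ENNReal.ofReal (((2 * Mq q R + 1).toNat : ℝ)) * ENNReal.ofReal (2 * ε / Q')
          * ENNReal.ofReal (2*(R:ℝ)) ^ N := by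
        rw [hcard, nsmul_eq_mul, ENNReal.ofReal_natCast, mul_assoc]
    _ ≤ ENNReal.ofReal (10 * ((N:ℝ)+1) * R * ε) * ENNReal.ofReal (2*(R:ℝ)) ^ N := by
        gcongr
        rw [← ENNReal.ofReal_mul (by positivity)]
        exact ENNReal.ofReal_le_ofReal hcardR
    _ = ENNReal.ofReal (10*((N:ℝ)+1)*R) * ENNReal.ofReal (2*R) ^ N
          * ENNReal.ofReal c * ENNReal.ofReal (rr q ^ (-δ)) := by
        rw [ENNReal.ofReal_mul (by positivity : (0:ℝ) ≤ 10*((N:ℝ)+1)*R),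
          ENNReal.ofReal_mul hc.le]
        ring

lemma vol_le (N R : ℕ) (hR : 1 ≤ R) {δ c : ℝ} (hδ : ((N:ℝ)+1) < δ) (hc : 0 < c)
    (hc1 : c ≤ 1) :
    volume {a : Fin (N+1) → ℝ | ¬ IsDeltaBadlyApproximable δ a ∧ ∀ i, |a i| ≤ (R:ℝ)}
      ≤ ENNReal.ofReal c * (ENNReal.ofReal (10*((N:ℝ)+1)*R) * ENNReal.ofReal (2*(R:ℝ)) ^ N
          * (∑' t : ℤ, gg (δ/((N:ℝ)+1)) t) ^ (N+1)) := by
  have hδ0 : 0 < δ := lt_trans (by positivity) hδ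
  have hcover : {a : Fin (N+1) → ℝ | ¬ IsDeltaBadlyApproximable δ a ∧ ∀ i, |a i| ≤ (R:ℝ)}
      ⊆ ⋃ q : Fin (N+1) → ℤ, Tset q R δ c := by
    rintro a ⟨hna, hbox⟩
    rw [IsDeltaBadlyApproximable] at hna
    push_neg at hna
    obtain ⟨q, hq0, m, hm⟩ := hna c hc
    have hm' : |(∑ i, (q i : ℝ) * a i) - (m : ℝ)| < c * rr q ^ (-δ) := hm
    have h1r : (1:ℝ) ≤ rr q := one_le_rr q hq0
    have hpow1 : rr q ^ (-δ) ≤ 1 :=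
      Real.rpow_le_one_of_one_le_of_nonpos h1r (by linarith)
    have hlt1 : |(∑ i, (q i : ℝ) * a i) - (m : ℝ)| < 1 :=
      lt_of_lt_of_le hm' (by nlinarith)
    have hsum_le : |∑ i, (q i : ℝ) * a i| ≤ ((∑ i, |q i| : ℤ) : ℝ) * R := by
      calc |∑ i, (q i : ℝ) * a i| ≤ ∑ i, |(q i : ℝ) * a i| := Finset.abs_sum_le_sum_abs _ _
        _ ≤ ∑ i, |(q i : ℝ)| * (R:ℝ) := by
            refine Finset.sum_le_sum fun i _ => ?_
            rw [abs_mul]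
            exact mul_le_mul_of_nonneg_left (hbox i) (abs_nonneg _)
        _ = ((∑ i, |q i| : ℤ) : ℝ) * R := by
            rw [← Finset.sum_mul]
            push_cast
            ring
    have hmlt : |(m:ℝ)| < ((Mq q R : ℤ) : ℝ) := by
      have : |(m:ℝ)| ≤ |∑ i, (q i : ℝ) * a i| + |(∑ i, (q i : ℝ) * a i) - (m : ℝ)| := by
        calc |(m:ℝ)| = |(∑ i, (q i : ℝ) * a i) + (-((∑ i, (q i : ℝ) * a i) - (m:ℝ)))| := by
              congr 1; ring
          _ ≤ |∑ i, (q i : ℝ) * a i| + |-((∑ i, (q i : ℝ) * a i) - (m:ℝ))| := abs_add_le _ _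
          _ = |∑ i, (q i : ℝ) * a i| + |(∑ i, (q i : ℝ) * a i) - (m : ℝ)| := by rw [abs_neg]
      have hMcast : ((Mq q R : ℤ) : ℝ) = ((∑ i, |q i| : ℤ) : ℝ) * R + 1 := by
        rw [Mq]; push_cast; ring
      rw [hMcast]
      calc |(m:ℝ)| ≤ |∑ i, (q i : ℝ) * a i| + |(∑ i, (q i : ℝ) * a i) - (m : ℝ)| := this
        _ < ((∑ i, |q i| : ℤ) : ℝ) * R + 1 := by linarith
    have hmem : m ∈ Finset.Icc (-(Mq q R)) (Mq q R) := by
      rw [Finset.mem_Icc]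
      have : |m| < Mq q R := by exact_mod_cast hmlt
      have := le_of_lt this
      constructor <;> [linarith [neg_abs_le m]; linarith [le_abs_self m]]
    exact Set.mem_iUnion.2 ⟨q, Set.mem_biUnion hmem ⟨hm', hbox⟩⟩
  refine le_trans (measure_mono hcover) ?_
  refine le_trans (measure_iUnion_le _) ?_
  have hTzero : volume (Tset (0 : Fin (N+1) → ℤ) R δ c) = 0 := by
    have : Tset (0 : Fin (N+1) → ℤ) R δ c = ∅ := by
      rw [Tset]
      apply Set.eq_empty_iff_forall_notMem.2
      intro a ha
      simp only [Set.mem_iUnion] at ha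
      obtain ⟨m, -, h, -⟩ := ha
      revert h
      simp [rr, Real.zero_rpow (neg_ne_zero.2 hδ0.ne'), abs_nonneg, not_lt]
    rw [this, measure_empty]
  have hterm : ∀ q : Fin (N+1) → ℤ, volume (Tset q R δ c) ≤
      ENNReal.ofReal (10*((N:ℝ)+1)*R) * ENNReal.ofReal (2*(R:ℝ)) ^ N
        * ENNReal.ofReal c * ENNReal.ofReal (rr q ^ (-δ)) := by
    intro q
    by_cases hq : q = 0
    · rw [hq, hTzero]; exact zero_le
    · exact Tset_bound hR hc q hq
  refine le_trans (ENNReal.tsum_le_tsum hterm) ?_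
  rw [ENNReal.tsum_mul_left]
  have hK : ∑' q : Fin (N+1) → ℤ, ENNReal.ofReal (rr q ^ (-δ))
      ≤ (∑' t : ℤ, gg (δ/((N:ℝ)+1)) t) ^ (N+1) := by
    calc ∑' q : Fin (N+1) → ℤ, ENNReal.ofReal (rr q ^ (-δ))
        ≤ ∑' q : Fin (N+1) → ℤ, ∏ i, gg (δ/((N:ℝ)+1)) (q i) :=
          ENNReal.tsum_le_tsum fun q => term_le_prod hδ0 q
      _ = (∑' t : ℤ, gg (δ/((N:ℝ)+1)) t) ^ (N+1) := tsum_pi_prod _ _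
  calc ENNReal.ofReal (10*((N:ℝ)+1)*R) * ENNReal.ofReal (2*(R:ℝ)) ^ N * ENNReal.ofReal c
        * ∑' q : Fin (N+1) → ℤ, ENNReal.ofReal (rr q ^ (-δ))
      ≤ ENNReal.ofReal (10*((N:ℝ)+1)*R) * ENNReal.ofReal (2*(R:ℝ)) ^ N * ENNReal.ofReal c
        * (∑' t : ℤ, gg (δ/((N:ℝ)+1)) t) ^ (N+1) := by gcongr
    _ = ENNReal.ofReal c * (ENNReal.ofReal (10*((N:ℝ)+1)*R) * ENNReal.ofReal (2*(R:ℝ)) ^ N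
          * (∑' t : ℤ, gg (δ/((N:ℝ)+1)) t) ^ (N+1)) := by ring

end DBAProof

/-- For any `δ > n`, the set of vectors of `ℝⁿ` that are not `δ`-badly
approximable has Lebesgue measure zero. -/
theorem ae_isDeltaBadlyApproximable (n : ℕ) (δ : ℝ) (hδ : (n : ℝ) < δ) :
    volume {a : Fin n → ℝ | ¬ IsDeltaBadlyApproximable δ a} = 0 := by
  open DBAProof in
  match n, hδ with
  | 0, hδ =>
    have hall : ∀ a : Fin 0 → ℝ, IsDeltaBadlyApproximable δ a := fun a =>
      ⟨1, one_pos, fun q hq m => absurd (Subsingleton.elim q 0) hq⟩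
    have : {a : Fin 0 → ℝ | ¬ IsDeltaBadlyApproximable δ a} = ∅ := by
      apply Set.eq_empty_iff_forall_notMem.2
      intro a ha
      exact ha (hall a)
    rw [this, measure_empty]
  | (N+1), hδ =>
    have hδ' : ((N:ℝ)+1) < δ := by push_cast at hδ; linarith
    have hδ0 : 0 < δ := lt_trans (by positivity) hδ'
    have hs : 1 < δ/((N:ℝ)+1) := by
      rw [lt_div_iff₀ (by positivity)]
      linarith
    -- cover by boxes
    have hcover : {a : Fin (N+1) → ℝ | ¬ IsDeltaBadlyApproximable δ a}
        ⊆ ⋃ R : ℕ, {a : Fin (N+1) → ℝ | ¬ IsDeltaBadlyApproximable δ a ∧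
            ∀ i, |a i| ≤ ((R+1 : ℕ) : ℝ)} := by
      intro a ha
      set B : ℕ := Finset.univ.sup (fun i => ⌈|a i|⌉₊) with hB
      refine Set.mem_iUnion.2 ⟨B, ha, fun i => ?_⟩
      calc |a i| ≤ (⌈|a i|⌉₊ : ℝ) := Nat.le_ceil _
        _ ≤ ((B+1 : ℕ) : ℝ) := by
            have : ⌈|a i|⌉₊ ≤ B + 1 :=
              le_trans (Finset.le_sup (f := fun i => ⌈|a i|⌉₊) (Finset.mem_univ i))
                (Nat.le_succ B)
            exact_mod_cast this
    refine le_antisymm (le_trans (measure_mono hcover) ?_) zero_le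
    refine le_trans (measure_iUnion_le _) ?_
    have hzero : ∀ R : ℕ,
        volume {a : Fin (N+1) → ℝ | ¬ IsDeltaBadlyApproximable δ a ∧
          ∀ i, |a i| ≤ ((R+1 : ℕ) : ℝ)} = 0 := by
      intro R
      set R' : ℕ := R + 1 with hR'
      have hR'1 : 1 ≤ R' := Nat.le_add_left 1 R
      set CC : ENNReal := ENNReal.ofReal (10*((N:ℝ)+1)*R') * ENNReal.ofReal (2*(R':ℝ)) ^ N
          * (∑' t : ℤ, gg (δ/((N:ℝ)+1)) t) ^ (N+1) with hCC
      have hCCne : CC ≠ ⊤ := by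
        rw [hCC]
        exact ENNReal.mul_ne_top
          (ENNReal.mul_ne_top ENNReal.ofReal_ne_top
            (ENNReal.pow_ne_top ENNReal.ofReal_ne_top))
          (ENNReal.pow_ne_top (tsum_gg_ne_top hs))
      have hbound : ∀ j : ℕ,
          volume {a : Fin (N+1) → ℝ | ¬ IsDeltaBadlyApproximable δ a ∧
            ∀ i, |a i| ≤ ((R':ℕ) : ℝ)} ≤ ENNReal.ofReal (1/((j:ℝ)+1)) * CC := by
        intro j
        have hcpos : (0:ℝ) < 1/((j:ℝ)+1) := by positivity
        have hcle : (1:ℝ)/((j:ℝ)+1) ≤ 1 := by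
          rw [div_le_one (by positivity)]
          linarith [Nat.cast_nonneg (α := ℝ) j]
        exact vol_le N R' hR'1 hδ' hcpos hcle
      have htend : Filter.Tendsto (fun j : ℕ => ENNReal.ofReal (1/((j:ℝ)+1)) * CC)
          Filter.atTop (nhds 0) := by
        have h1 : Filter.Tendsto (fun j : ℕ => ENNReal.ofReal (1/((j:ℝ)+1)))
            Filter.atTop (nhds 0) := by
          rw [show (0 : ENNReal) = ENNReal.ofReal 0 by simp]
          exact ENNReal.tendsto_ofReal tendsto_one_div_add_atTop_nhds_zero_nat
        have := ENNReal.Tendsto.mul_const h1 (Or.inr hCCne)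
        rwa [zero_mul] at this
      exact le_antisymm (ge_of_tendsto' htend (fun j => hbound j)) zero_le
    exact le_of_eq (by simp only [hzero, tsum_zero])
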